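/- Let N ≥ 3 and let S_C be the N×N circulant matrix with (S_C)_{ii} = 1, (S_C)_{ij} = −1 when j ≡ i+1 (mod N), and 0 otherwise (the oriented incidence matrix of the simple cycle). Define M ∈ ℝ^{N×N} by M_{ij} = (N−1)/(2N) − n/N, where n is the unique integer in {0,…,N−1} with n ≡ j − i (mod N). Then M satisfies the four Penrose equations for S_C, i.e. M is the Moore–Penrose pseudoinverse of S_C; in particular M·S_C = S_C·M = I_N − (1/N)·J_N and M·1_N = 0. -/

import Mathlib

open Matrix

/-- The matrix with entries `(N-1)/(2N) - n/N`, where `n ≡ j - i (mod N)` with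
`0 ≤ n ≤ N-1`, is the Moore–Penrose pseudoinverse of the circulant incidence matrix
`S_C` of the simple cycle (first row `[1, -1, 0, …, 0]`): it satisfies the four Penrose
equations, and in particular `M·S_C = S_C·M = I - (1/N)·J` and `M·1 = 0`. -/
theorem cycle_incidence_pseudoinverse_formula
    (N : ℕ) (hN : 3 ≤ N)
    (S M : Matrix (Fin N) (Fin N) ℝ)
    (hS : ∀ i j, S i j =
      if i = j then 1
      else if j.val = (i.val + 1) % N then -1 else 0)
    (hM : ∀ i j, M i j =
      ((N : ℝ) - 1) / (2 * N) - (((j.val + N - i.val) % N : ℕ) : ℝ) / N) :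
    S * M * S = S ∧ M * S * M = M ∧ (S * M)ᵀ = S * M ∧ (M * S)ᵀ = M * S ∧
    M * S = 1 - ((N : ℝ))⁻¹ • Matrix.of (fun _ _ => (1 : ℝ)) ∧
    S * M = 1 - ((N : ℝ))⁻¹ • Matrix.of (fun _ _ => (1 : ℝ)) ∧
    M.mulVec (fun _ => 1) = 0 := by
  have hN0 : 0 < N := by omega
  haveI : NeZero N := ⟨by omega⟩
  have hNR : (N : ℝ) ≠ 0 := Nat.cast_ne_zero.mpr (by omega)
  have hmod : ∀ x : ℕ, x < 2 * N → x % N = if x < N then x else x - N := by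
    intro x hx
    split_ifs with h
    · exact Nat.mod_eq_of_lt h
    · rw [Nat.mod_eq_sub_mod (by omega), Nat.mod_eq_of_lt (by omega)]
  -- row action of S
  have rowS : ∀ (X : Fin N → ℝ) (i : Fin N),
      ∑ k, S i k * X k = X i - X ⟨(i.val + 1) % N, Nat.mod_lt _ hN0⟩ := by
    intro X i
    set i1 : Fin N := ⟨(i.val + 1) % N, Nat.mod_lt _ hN0⟩ with hi1
    have hi1v : i1.val = (i.val + 1) % N := rfl
    have hne : i ≠ i1 := by
      intro h
      have h2 : i.val = (i.val + 1) % N := congrArg Fin.val h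
      rw [hmod _ (by omega)] at h2
      have := i.isLt
      split_ifs at h2 <;> omega
    have hterm : ∀ k, S i k * X k =
        (if k = i then X i else 0) + (if k = i1 then -X i1 else 0) := by
      intro k
      have hcond : ∀ hk : k.val = (i.val + 1) % N, k = i1 :=
        fun hk => Fin.ext (by rw [hk, hi1v])
      rw [hS]
      by_cases h1 : k = i
      · subst h1
        rw [if_pos rfl, if_pos rfl, if_neg hne, one_mul, add_zero]
      · rw [if_neg (fun h => h1 h.symm), if_neg h1, zero_add]
        by_cases h2 : k = i1
        · rw [if_pos (by rw [h2, hi1v]), if_pos h2, h2]; ring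
        · rw [if_neg (fun h => h2 (hcond h)), if_neg h2, zero_mul]
    rw [Finset.sum_congr rfl (fun k _ => hterm k), Finset.sum_add_distrib,
      Finset.sum_ite_eq' Finset.univ i (fun _ => X i),
      Finset.sum_ite_eq' Finset.univ i1 (fun _ => -X i1)]
    simp [sub_eq_add_neg]
  -- column action of S
  have colS : ∀ (X : Fin N → ℝ) (j : Fin N),
      ∑ k, X k * S k j = X j - X ⟨(j.val + N - 1) % N, Nat.mod_lt _ hN0⟩ := by
    intro X j
    set j0 : Fin N := ⟨(j.val + N - 1) % N, Nat.mod_lt _ hN0⟩ with hj0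
    have hj0v : j0.val = (j.val + N - 1) % N := rfl
    have hjlt := j.isLt
    have hne : j ≠ j0 := by
      intro h
      have h2 : j.val = (j.val + N - 1) % N := congrArg Fin.val h
      rw [hmod _ (by omega)] at h2
      split_ifs at h2 <;> omega
    have hcond : ∀ k : Fin N, (j.val = (k.val + 1) % N) ↔ k = j0 := by
      intro k
      have hklt := k.isLt
      rw [Fin.ext_iff, hj0v, hmod (k.val + 1) (by omega), hmod (j.val + N - 1) (by omega)]
      constructor
      · intro h; split_ifs at h ⊢ <;> omega
      · intro h; split_ifs at h ⊢ <;> omega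
    have hterm : ∀ k, X k * S k j =
        (if k = j then X j else 0) + (if k = j0 then -X j0 else 0) := by
      intro k
      rw [hS]
      by_cases h1 : k = j
      · subst h1
        have hnc : ¬ (k.val = (k.val + 1) % N) := by
          rw [hmod _ (by omega)]
          have := k.isLt
          split_ifs <;> omega
        rw [if_pos rfl, if_pos rfl, if_neg hne, mul_one, add_zero]
      · rw [if_neg h1, if_neg h1, zero_add]
        by_cases h2 : k = j0
        · rw [if_pos ((hcond k).mpr h2), if_pos h2, h2]; ring
        · rw [if_neg (fun h => h2 ((hcond k).mp h)), if_neg h2, mul_zero]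
    rw [Finset.sum_congr rfl (fun k _ => hterm k), Finset.sum_add_distrib,
      Finset.sum_ite_eq' Finset.univ j (fun _ => X j),
      Finset.sum_ite_eq' Finset.univ j0 (fun _ => -X j0)]
    simp [sub_eq_add_neg]
    -- entry computation for S*M
  have hSMe : ∀ i j : Fin N,
      M i j - M ⟨(i.val + 1) % N, Nat.mod_lt _ hN0⟩ j
        = (if i = j then 1 else 0) - (N : ℝ)⁻¹ := by
    intro i j
    have hi := i.isLt
    have hj := j.isLt
    rw [hM, hM]
    simp only [Fin.val_mk]
    rcases eq_or_ne i j with h | h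
    · subst h
      have ha0 : (i.val + N - i.val) % N = 0 := by
        rw [hmod _ (by omega)]; split_ifs <;> omega
      have hb0 : (i.val + N - ((i.val + 1) % N)) % N = N - 1 := by
        rw [hmod (i.val + 1) (by omega), hmod _ (by split_ifs <;> omega)]
        split_ifs <;> omega
      rw [ha0, hb0, if_pos rfl, Nat.cast_sub (by omega : 1 ≤ N)]
      push_cast
      field_simp
      ring
    · have hij : i.val ≠ j.val := fun hh => h (Fin.ext hh)
      have ha1 : 1 ≤ (j.val + N - i.val) % N := by
        rw [hmod _ (by omega)]; split_ifs <;> omega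
      have hb1 : (j.val + N - ((i.val + 1) % N)) % N = (j.val + N - i.val) % N - 1 := by
        rw [hmod (j.val + N - i.val) (by omega), hmod (i.val + 1) (by omega),
          hmod _ (by split_ifs <;> omega)]
        split_ifs <;> omega
      rw [hb1, if_neg h, Nat.cast_sub ha1]
      push_cast
      field_simp
      ring
  -- entry computation for M*S
  have hMSe : ∀ i j : Fin N,
      M i j - M i ⟨(j.val + N - 1) % N, Nat.mod_lt _ hN0⟩
        = (if i = j then 1 else 0) - (N : ℝ)⁻¹ := by
    intro i j
    have hi := i.isLt
    have hj := j.isLt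
    rw [hM, hM]
    simp only [Fin.val_mk]
    rcases eq_or_ne i j with h | h
    · subst h
      have ha0 : (i.val + N - i.val) % N = 0 := by
        rw [hmod _ (by omega)]; split_ifs <;> omega
      have hb0 : ((i.val + N - 1) % N + N - i.val) % N = N - 1 := by
        rw [hmod (i.val + N - 1) (by omega), hmod _ (by split_ifs <;> omega)]
        split_ifs <;> omega
      rw [ha0, hb0, if_pos rfl, Nat.cast_sub (by omega : 1 ≤ N)]
      push_cast
      field_simp
      ring
    · have hij : i.val ≠ j.val := fun hh => h (Fin.ext hh)
      have ha1 : 1 ≤ (j.val + N - i.val) % N := by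
        rw [hmod _ (by omega)]; split_ifs <;> omega
      have hb1 : ((j.val + N - 1) % N + N - i.val) % N = (j.val + N - i.val) % N - 1 := by
        rw [hmod (j.val + N - i.val) (by omega), hmod (j.val + N - 1) (by omega),
          hmod _ (by split_ifs <;> omega)]
        split_ifs <;> omega
      rw [hb1, if_neg h, Nat.cast_sub ha1]
      push_cast
      field_simp
      ring
  set J : Matrix (Fin N) (Fin N) ℝ := Matrix.of (fun _ _ => (1 : ℝ)) with hJdef
  have hSM : S * M = 1 - (N : ℝ)⁻¹ • J := by
    ext i j
    rw [Matrix.mul_apply, rowS (fun k => M k j) i]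
    rw [hSMe i j]
    simp [hJdef, Matrix.one_apply, Matrix.sub_apply, Matrix.smul_apply]
  have hMS : M * S = 1 - (N : ℝ)⁻¹ • J := by
    ext i j
    rw [Matrix.mul_apply, colS (fun k => M i k) j]
    rw [hMSe i j]
    simp [hJdef, Matrix.one_apply, Matrix.sub_apply, Matrix.smul_apply]
  -- Gauss sum
  have hsum : (∑ k : Fin N, ((k.val : ℝ))) = N * ((N : ℝ) - 1) / 2 := by
    have h0 := Finset.sum_range_id_mul_two N
    have h1 : ((∑ i ∈ Finset.range N, i : ℕ) : ℝ) * 2 = (N : ℝ) * ((N : ℝ) - 1) := by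
      rw [← Nat.cast_ofNat, ← Nat.cast_mul, h0, Nat.cast_mul,
        Nat.cast_sub (by omega : 1 ≤ N), Nat.cast_one]
    rw [Fin.sum_univ_eq_sum_range (fun k => ((k : ℕ) : ℝ)) N]
    push_cast at h1
    linarith
  -- row sums of M vanish
  have hrow : ∀ i : Fin N, ∑ k : Fin N, M i k = 0 := by
    intro i
    have hi := i.isLt
    have e1 : ∀ k : Fin N, M i k
        = ((N : ℝ) - 1) / (2 * N) - (((k - i : Fin N).val : ℕ) : ℝ) / N := by
      intro k
      rw [hM, Fin.sub_def]
      simp only [Fin.val_mk]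
      rw [show N - i.val + k.val = k.val + N - i.val from by omega]
    rw [Finset.sum_congr rfl (fun k _ => e1 k), Finset.sum_sub_distrib,
      Finset.sum_const, Fintype.sum_equiv (Equiv.subRight i)
        (fun k => (((k - i : Fin N).val : ℕ) : ℝ) / N)
        (fun k => ((k.val : ℕ) : ℝ) / N) (fun k => rfl)]
    rw [← Finset.sum_div, hsum]
    simp only [Finset.card_univ, Fintype.card_fin, nsmul_eq_mul]
    field_simp
    ring
  -- column sums of M vanish
  have hcol : ∀ j : Fin N, ∑ k : Fin N, M k j = 0 := by
    intro j
    have hj := j.isLt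
    have e1 : ∀ k : Fin N, M k j
        = ((N : ℝ) - 1) / (2 * N) - (((j - k : Fin N).val : ℕ) : ℝ) / N := by
      intro k
      rw [hM, Fin.sub_def]
      simp only [Fin.val_mk]
      rw [show N - k.val + j.val = j.val + N - k.val from by omega]
    rw [Finset.sum_congr rfl (fun k _ => e1 k), Finset.sum_sub_distrib,
      Finset.sum_const, Fintype.sum_equiv (Equiv.subLeft j)
        (fun k => (((j - k : Fin N).val : ℕ) : ℝ) / N)
        (fun k => ((k.val : ℕ) : ℝ) / N) (fun k => rfl)]
    rw [← Finset.sum_div, hsum]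
    simp only [Finset.card_univ, Fintype.card_fin, nsmul_eq_mul]
    field_simp
    ring
  have hSJ : S * J = 0 := by
    ext i j
    rw [Matrix.mul_apply]
    have := rowS (fun _ => (1 : ℝ)) i
    simp only [hJdef, Matrix.of_apply, Matrix.zero_apply]
    rw [this]
    ring
  have hJM : J * M = 0 := by
    ext i j
    rw [Matrix.mul_apply]
    simp only [hJdef, Matrix.of_apply, one_mul, Matrix.zero_apply]
    exact hcol j
  refine ⟨?_, ?_, ?_, ?_, hMS, hSM, ?_⟩
  · rw [mul_assoc, hMS, mul_sub, mul_one, Matrix.mul_smul, hSJ, smul_zero, sub_zero]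
  · rw [hMS, sub_mul, one_mul, Matrix.smul_mul, hJM, smul_zero, sub_zero]
  · rw [hSM]
    have hJT : Jᵀ = J := rfl
    rw [Matrix.transpose_sub, Matrix.transpose_one, Matrix.transpose_smul, hJT]
  · rw [hMS]
    have hJT : Jᵀ = J := rfl
    rw [Matrix.transpose_sub, Matrix.transpose_one, Matrix.transpose_smul, hJT]
  · ext i
    simp only [Matrix.mulVec, dotProduct, mul_one, Pi.zero_apply]
    exact hrow i
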